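/- Let Σ be a multisigned complete graph on n vertices (n ≥ 3) in which every triangle has multisign equal to a fixed element h of G. Then every Hamiltonian cycle of Σ has multisign h^{n−2}; in particular, since h² = e, every Hamiltonian cycle has multisign h when n is odd and multisign e when n is even. -/

import Mathlib

def hamMultisign {n m : ℕ} [NeZero n] (σ : Fin n → Fin n → (Fin m → ℤˣ))
    (v : Fin n → Fin n) : Fin m → ℤˣ :=
  ∏ k : Fin n, σ (v k) (v (k + 1))

def triMultisign {n m : ℕ} (σ : Fin n → Fin n → (Fin m → ℤˣ))
    (a b c : Fin n) : Fin m → ℤˣ :=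
  σ a b * σ b c * σ c a

lemma pi_units_mul_self {m : ℕ} (x : Fin m → ℤˣ) : x * x = 1 := by
  funext i
  exact Int.units_mul_self (x i)

open Fin.NatCast

theorem ham_multisign_of_const_tri (n m : ℕ) (hn : 3 ≤ n) [NeZero n]
    (σ : Fin n → Fin n → (Fin m → ℤˣ))
    (hsym : ∀ a b, σ a b = σ b a)
    (h : Fin m → ℤˣ)
    (htri : ∀ a b c : Fin n, a ≠ b → b ≠ c → a ≠ c → triMultisign σ a b c = h) :
    ∀ v : Fin n → Fin n, Function.Bijective v →
      hamMultisign σ v = h ^ (n - 2) ∧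
      (Odd n → hamMultisign σ v = h) ∧
      (Even n → hamMultisign σ v = 1) := by
  intro v hv
  -- distinct Fin casts
  have hcast : ∀ i : ℕ, i < n → ((i : Fin n) : ℕ) = i := fun i hi => by
    simp [Fin.val_natCast, Nat.mod_eq_of_lt hi]
  have hne : ∀ i j : ℕ, i < n → j < n → i ≠ j → (i : Fin n) ≠ (j : Fin n) := by
    intro i j hi hj hij hc
    apply hij
    have := congrArg Fin.val hc
    rwa [hcast i hi, hcast j hj] at this
  set g : ℕ → (Fin m → ℤˣ) := fun i => σ (v (i : Fin n)) (v ((i : Fin n) + 1)) with hg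
  have hham : hamMultisign σ v = ∏ i ∈ Finset.range n, g i := by
    rw [hamMultisign, ← Fin.prod_univ_eq_prod_range g]
    apply Finset.prod_congr rfl
    intro k _
    simp [hg, Fin.cast_val_eq_self]
  have key : ∀ j : ℕ, 1 ≤ j → j ≤ n - 1 →
      ∏ i ∈ Finset.range j, g i = h ^ (j - 1) * σ (v 0) (v (j : Fin n)) := by
    intro j h1 h2
    induction j with
    | zero => omega
    | succ j ih =>
      rcases Nat.eq_or_lt_of_le h1 with h1' | h1'
      · -- j + 1 = 1
        have : j = 0 := by omega
        subst this
        simp [hg]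
      · have hj1 : 1 ≤ j := by omega
        have hjn : j ≤ n - 1 := by omega
        rw [Finset.prod_range_succ, ih hj1 hjn]
        -- triangle (v 0, v j, v (j+1))
        have hd1 : (0 : Fin n) ≠ (j : Fin n) := by
          have := hne 0 j (by omega) (by omega) (by omega)
          simpa using this
        have hd2 : (j : Fin n) ≠ ((j + 1 : ℕ) : Fin n) :=
          hne j (j+1) (by omega) (by omega) (by omega)
        have hd3 : (0 : Fin n) ≠ ((j + 1 : ℕ) : Fin n) := by
          have := hne 0 (j+1) (by omega) (by omega) (by omega)
          simpa using this
        have htr := htri (v 0) (v (j : Fin n)) (v ((j+1 : ℕ) : Fin n))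
          (fun hc => hd1 (hv.1 hc)) (fun hc => hd2 (hv.1 hc)) (fun hc => hd3 (hv.1 hc))
        rw [triMultisign] at htr
        have hstep : σ (v 0) (v (j : Fin n)) * σ (v (j : Fin n)) (v ((j+1:ℕ) : Fin n))
            = h * σ (v 0) (v ((j+1:ℕ) : Fin n)) := by
          have := congrArg (· * σ (v ((j+1:ℕ) : Fin n)) (v 0)) htr
          rw [mul_assoc, pi_units_mul_self, mul_one] at this
          rw [this, hsym (v ((j+1:ℕ):Fin n)) (v 0)]
        have hgj : g j = σ (v (j : Fin n)) (v ((j+1:ℕ) : Fin n)) := by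
          simp [hg, Nat.cast_add, Nat.cast_one]
        rw [hgj, mul_assoc, hstep]
        have : j + 1 - 1 = (j - 1) + 1 := by omega
        rw [this, pow_succ, mul_assoc]
  have hmain : hamMultisign σ v = h ^ (n - 2) := by
    have hn1 : n = (n - 1) + 1 := by omega
    rw [hham, hn1, Finset.prod_range_succ, ← hn1,
      key (n-1) (by omega) (le_refl _)]
    have hgn : g (n - 1) = σ (v ((n-1 : ℕ) : Fin n)) (v 0) := by
      have : (((n-1 : ℕ) : Fin n) + 1) = 0 := by
        have : ((n-1 : ℕ) : Fin n) + 1 = ((n - 1 + 1 : ℕ) : Fin n) := by push_cast; ring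
        rw [this, ← hn1]
        simp
      simp [hg, this]
    rw [hgn, hsym (v ((n-1:ℕ):Fin n)) (v 0), mul_assoc, pi_units_mul_self, mul_one]
    congr 1
  refine ⟨hmain, ?_, ?_⟩
  · rintro ⟨k, hk⟩
    rw [hmain]
    have : n - 2 = 2 * (k - 1) + 1 := by omega
    rw [this, pow_succ, pow_mul,
      show h ^ 2 = 1 from by rw [sq]; exact pi_units_mul_self h, one_pow, one_mul]
  · rintro ⟨k, hk⟩
    rw [hmain]
    have : n - 2 = 2 * (k - 1) := by omega
    rw [this, pow_mul, show h ^ 2 = 1 from by rw [sq]; exact pi_units_mul_self h, one_pow]
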